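/- Let M ⊆ X and N ⊆ Y be closed subspaces of Banach spaces X, Y over 𝕜 (𝕜 = ℝ or ℂ). If every bounded bilinear form φ : M × N → 𝕜 admits a bounded bilinear extension φ̂ : X × Y → 𝕜 with ‖φ̂‖ = ‖φ‖, then for every F in the algebraic tensor product M ⊗ N, the projective norm of F computed in M ⊗ N equals the projective norm of its canonical image in X ⊗ Y: ‖F‖_{π, M⊗N} = ‖ι(F)‖_{π, X⊗Y}, where ι : M ⊗ N → X ⊗ Y is induced by the inclusions. -/
import Mathlib


/-- The canonical operator-norm group structure on `N →L[𝕜] Z` for a submodule `N`;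
this is definitionally the canonical Mathlib instance, registered to help instance search. -/
noncomputable instance instCLMNormedAddCommGroupOfSubmodule {𝕜 : Type*} [RCLike 𝕜] {Y Z : Type*}
    [NormedAddCommGroup Y] [NormedSpace 𝕜 Y]
    [NormedAddCommGroup Z] [NormedSpace 𝕜 Z] (N : Submodule 𝕜 Y) :
    NormedAddCommGroup (↥N →L[𝕜] Z) := inferInstance

/-- The canonical normed-space structure on `N →L[𝕜] Z` for a submodule `N`;
this is definitionally the canonical Mathlib instance, registered to help instance search. -/
noncomputable instance instCLMNormedSpaceOfSubmodule {𝕜 : Type*} [RCLike 𝕜] {Y Z : Type*}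
    [NormedAddCommGroup Y] [NormedSpace 𝕜 Y]
    [NormedAddCommGroup Z] [NormedSpace 𝕜 Z] (N : Submodule 𝕜 Y) :
    NormedSpace 𝕜 (↥N →L[𝕜] Z) := inferInstance

/-- The projective norm of an element `F` of the algebraic tensor product `X ⊗ Y` of two
normed spaces: the infimum of `Σᵢ ‖xᵢ‖·‖yᵢ‖` over all finite representations
`F = Σᵢ xᵢ ⊗ yᵢ`. -/
noncomputable def projNorm (𝕜 : Type*) [RCLike 𝕜] {X Y : Type*}
    [NormedAddCommGroup X] [NormedSpace 𝕜 X]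
    [NormedAddCommGroup Y] [NormedSpace 𝕜 Y]
    (F : TensorProduct 𝕜 X Y) : ℝ :=
  sInf {r : ℝ | ∃ (n : ℕ) (x : Fin n → X) (y : Fin n → Y),
    F = ∑ i, x i ⊗ₜ[𝕜] y i ∧ r = ∑ i, ‖x i‖ * ‖y i‖}

section ProjNormLemmas

open Finset

variable {𝕜 : Type*} [RCLike 𝕜] {X Y : Type*}
  [NormedAddCommGroup X] [NormedSpace 𝕜 X]
  [NormedAddCommGroup Y] [NormedSpace 𝕜 Y]

/-- The defining set of representations. -/
def projSet (𝕜 : Type*) [RCLike 𝕜] {X Y : Type*}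
    [NormedAddCommGroup X] [NormedSpace 𝕜 X]
    [NormedAddCommGroup Y] [NormedSpace 𝕜 Y]
    (F : TensorProduct 𝕜 X Y) : Set ℝ :=
  {r : ℝ | ∃ (n : ℕ) (x : Fin n → X) (y : Fin n → Y),
    F = ∑ i, x i ⊗ₜ[𝕜] y i ∧ r = ∑ i, ‖x i‖ * ‖y i‖}

theorem projNorm_eq (F : TensorProduct 𝕜 X Y) : projNorm 𝕜 F = sInf (projSet 𝕜 F) := rfl

theorem projSet_nonempty (F : TensorProduct 𝕜 X Y) : (projSet 𝕜 F).Nonempty := by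
  obtain ⟨s, hs⟩ := TensorProduct.exists_finset F
  refine ⟨∑ i : Fin s.card, ‖((s.equivFin.symm i : s) : X × Y).1‖ *
      ‖((s.equivFin.symm i : s) : X × Y).2‖, s.card,
    fun i => ((s.equivFin.symm i : s) : X × Y).1,
    fun i => ((s.equivFin.symm i : s) : X × Y).2, ?_, rfl⟩
  have h1 : F = ∑ a : s, (((a : X × Y).1) ⊗ₜ[𝕜] ((a : X × Y).2)) := by
    rw [hs, ← Finset.sum_coe_sort s (fun p => p.1 ⊗ₜ[𝕜] p.2)]
  rw [h1]
  exact Fintype.sum_equiv s.equivFin _ _ (fun a => by simp)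

theorem projSet_nonneg {F : TensorProduct 𝕜 X Y} {r : ℝ} (hr : r ∈ projSet 𝕜 F) : 0 ≤ r := by
  obtain ⟨n, x, y, -, rfl⟩ := hr
  exact Finset.sum_nonneg fun i _ => mul_nonneg (norm_nonneg _) (norm_nonneg _)

theorem projSet_bddBelow (F : TensorProduct 𝕜 X Y) : BddBelow (projSet 𝕜 F) :=
  ⟨0, fun _ hr => projSet_nonneg hr⟩

theorem projNorm_nonneg (F : TensorProduct 𝕜 X Y) : 0 ≤ projNorm 𝕜 F :=
  le_csInf (projSet_nonempty F) fun _ hr => projSet_nonneg hr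

theorem projNorm_le_rep {F : TensorProduct 𝕜 X Y} {n : ℕ} (x : Fin n → X) (y : Fin n → Y)
    (hF : F = ∑ i, x i ⊗ₜ[𝕜] y i) : projNorm 𝕜 F ≤ ∑ i, ‖x i‖ * ‖y i‖ :=
  csInf_le (projSet_bddBelow F) ⟨n, x, y, hF, rfl⟩

theorem projNorm_zero : projNorm 𝕜 (0 : TensorProduct 𝕜 X Y) = 0 := by
  refine le_antisymm ?_ (projNorm_nonneg 0)
  have := projNorm_le_rep (𝕜 := 𝕜) (F := (0 : TensorProduct 𝕜 X Y))
    (fun _ : Fin 0 => (0 : X)) (fun _ => (0 : Y)) (by simp)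
  simpa using this

theorem projNorm_add_le (F G : TensorProduct 𝕜 X Y) :
    projNorm 𝕜 (F + G) ≤ projNorm 𝕜 F + projNorm 𝕜 G := by
  have key : ∀ r ∈ projSet 𝕜 F, ∀ s ∈ projSet 𝕜 G, projNorm 𝕜 (F + G) ≤ r + s := by
    rintro r ⟨n, x, y, hF, rfl⟩ s ⟨m, x', y', hG, rfl⟩
    have hrep : F + G = ∑ i : Fin (n + m), (Fin.append x x') i ⊗ₜ[𝕜] (Fin.append y y') i := by
      rw [Fin.sum_univ_add]
      simp only [Fin.append_left, Fin.append_right]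
      rw [← hF, ← hG]
    refine (projNorm_le_rep _ _ hrep).trans_eq ?_
    rw [Fin.sum_univ_add]
    simp only [Fin.append_left, Fin.append_right]
  have h1 : ∀ s ∈ projSet 𝕜 G, projNorm 𝕜 (F + G) - s ≤ projNorm 𝕜 F := fun s hs =>
    le_csInf (projSet_nonempty F) fun r hr => by linarith [key r hr s hs]
  have h2 : projNorm 𝕜 (F + G) - projNorm 𝕜 F ≤ projNorm 𝕜 G :=
    le_csInf (projSet_nonempty G) fun s hs => by linarith [h1 s hs]
  linarith

/-- Abstract bound: a quantity dominated by `c * r` for every representation value `r`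
is dominated by `c * projNorm F`. -/
theorem le_mul_projNorm_of_forall {F : TensorProduct 𝕜 X Y} {a c : ℝ} (hc : 0 ≤ c)
    (key : ∀ (n : ℕ) (x : Fin n → X) (y : Fin n → Y), F = ∑ i, x i ⊗ₜ[𝕜] y i →
      a ≤ c * ∑ i, ‖x i‖ * ‖y i‖) : a ≤ c * projNorm 𝕜 F := by
  rcases hc.eq_or_lt with rfl | hc
  · obtain ⟨r, n, x, y, hF, rfl⟩ := projSet_nonempty F
    simpa using key n x y hF
  · rw [← div_le_iff₀' hc]
    refine le_csInf (projSet_nonempty F) ?_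
    rintro r ⟨n, x, y, hF, rfl⟩
    rw [div_le_iff₀' hc]
    exact key n x y hF

theorem projNorm_smul_le (c : 𝕜) (F : TensorProduct 𝕜 X Y) :
    projNorm 𝕜 (c • F) ≤ ‖c‖ * projNorm 𝕜 F := by
  refine le_mul_projNorm_of_forall (norm_nonneg c) ?_
  intro n x y hF
  have hrep : c • F = ∑ i, (c • x i) ⊗ₜ[𝕜] y i := by
    rw [hF, Finset.smul_sum]
    simp [TensorProduct.smul_tmul']
  refine (projNorm_le_rep _ _ hrep).trans_eq ?_
  rw [Finset.mul_sum]
  refine Finset.sum_congr rfl fun i _ => ?_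
  rw [norm_smul, mul_assoc]

theorem projNorm_smul (c : 𝕜) (F : TensorProduct 𝕜 X Y) :
    projNorm 𝕜 (c • F) = ‖c‖ * projNorm 𝕜 F := by
  refine le_antisymm (projNorm_smul_le c F) ?_
  rcases eq_or_ne c 0 with rfl | hc
  · simp [projNorm_zero, projNorm_nonneg]
  · have h2 := projNorm_smul_le c⁻¹ (c • F)
    rw [inv_smul_smul₀ hc] at h2
    have h3 := mul_le_mul_of_nonneg_left h2 (norm_nonneg c)
    calc ‖c‖ * projNorm 𝕜 F ≤ ‖c‖ * (‖c⁻¹‖ * projNorm 𝕜 (c • F)) := h3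
      _ = projNorm 𝕜 (c • F) := by
        rw [norm_inv, ← mul_assoc, mul_inv_cancel₀ (norm_ne_zero_iff.mpr hc), one_mul]

theorem projNorm_neg (F : TensorProduct 𝕜 X Y) : projNorm 𝕜 (-F) = projNorm 𝕜 F := by
  have := projNorm_smul (-1 : 𝕜) F
  simpa using this

theorem projNorm_tmul_le (x : X) (y : Y) : projNorm 𝕜 (x ⊗ₜ[𝕜] y) ≤ ‖x‖ * ‖y‖ := by
  have := projNorm_le_rep (𝕜 := 𝕜) (F := x ⊗ₜ[𝕜] y) (fun _ : Fin 1 => x) (fun _ => y) (by simp)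
  simpa using this

theorem norm_lift_le (ψ : X →L[𝕜] Y →L[𝕜] 𝕜) (F : TensorProduct 𝕜 X Y) :
    ‖TensorProduct.lift ((ContinuousLinearMap.coeLM 𝕜).comp ψ.toLinearMap) F‖ ≤
      ‖ψ‖ * projNorm 𝕜 F := by
  refine le_mul_projNorm_of_forall (norm_nonneg ψ) ?_
  intro n x y hF
  rw [hF, map_sum]
  calc ‖∑ i, TensorProduct.lift ((ContinuousLinearMap.coeLM 𝕜).comp ψ.toLinearMap)
        (x i ⊗ₜ[𝕜] y i)‖
      ≤ ∑ i, ‖ψ (x i) (y i)‖ := by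
        refine (norm_sum_le _ _).trans_eq ?_
        refine Finset.sum_congr rfl fun i _ => ?_
        simp [TensorProduct.lift.tmul]
    _ ≤ ∑ i, ‖ψ‖ * (‖x i‖ * ‖y i‖) := by
        refine Finset.sum_le_sum fun i _ => ?_
        rw [← mul_assoc]
        exact ψ.le_opNorm₂ (x i) (y i)
    _ = ‖ψ‖ * ∑ i, ‖x i‖ * ‖y i‖ := by rw [Finset.mul_sum]

theorem projNorm_map_le (M : Submodule 𝕜 X) (N : Submodule 𝕜 Y) (F : TensorProduct 𝕜 M N) :
    projNorm 𝕜 (TensorProduct.map M.subtype N.subtype F) ≤ projNorm 𝕜 F := by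
  refine le_csInf (projSet_nonempty F) ?_
  rintro r ⟨n, x, y, hF, rfl⟩
  have hrep : TensorProduct.map M.subtype N.subtype F =
      ∑ i, ((x i : X) ⊗ₜ[𝕜] (y i : Y)) := by
    rw [hF, map_sum]
    simp [TensorProduct.map_tmul]
  exact (projNorm_le_rep _ _ hrep).trans_eq rfl

end ProjNormLemmas

set_option maxHeartbeats 1000000 in
set_option synthInstance.maxHeartbeats 400000 in
/-- If every bounded bilinear form on `M × N` extends to `X × Y` with the same norm, then
the projective norm on `M ⊗ N` agrees with the projective norm induced from `X ⊗ Y`. -/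
theorem stmt_15 {𝕜 : Type*} [RCLike 𝕜] {X Y : Type*}
    [NormedAddCommGroup X] [NormedSpace 𝕜 X] [CompleteSpace X]
    [NormedAddCommGroup Y] [NormedSpace 𝕜 Y] [CompleteSpace Y]
    (M : Submodule 𝕜 X) (N : Submodule 𝕜 Y)
    (hMc : IsClosed (M : Set X)) (hNc : IsClosed (N : Set Y))
    (h : ∀ φ : M →L[𝕜] N →L[𝕜] 𝕜, ∃ φhat : X →L[𝕜] Y →L[𝕜] 𝕜,
      (∀ (u : M) (v : N), φhat (u : X) (v : Y) = φ u v) ∧ ‖φhat‖ = ‖φ‖)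
    (F : TensorProduct 𝕜 M N) :
    projNorm 𝕜 F = projNorm 𝕜 (TensorProduct.map M.subtype N.subtype F) := by
  classical
  refine le_antisymm ?_ (projNorm_map_le M N F)
  by_cases hF0 : F = 0
  · subst hF0
    simp [projNorm_zero, projNorm_nonneg]
  haveI hnzd : NoZeroSMulDivisors 𝕜 (TensorProduct 𝕜 ↥M ↥N) := inferInstance
  -- Put the projective seminorm structure on `M ⊗ N`.
  letI : SeminormedAddCommGroup (TensorProduct 𝕜 M N) :=
    AddGroupSeminormClass.toSeminormedAddCommGroup
      ({ toFun := projNorm 𝕜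
         map_zero' := projNorm_zero
         add_le' := projNorm_add_le
         neg' := projNorm_neg } : AddGroupSeminorm (TensorProduct 𝕜 M N))
  have hnorm : ∀ z : TensorProduct 𝕜 M N, ‖z‖ = projNorm 𝕜 z := fun _ => rfl
  letI : NormedSpace 𝕜 (TensorProduct 𝕜 M N) :=
    ⟨fun c z => by
      show projNorm 𝕜 (c • z) ≤ ‖c‖ * projNorm 𝕜 z
      exact projNorm_smul_le c z⟩
  -- The norm-attaining functional on the span of `F`.
  set p : Submodule 𝕜 (TensorProduct 𝕜 M N) := Submodule.span 𝕜 {F} with hp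
  have hFp : F ∈ p := Submodule.mem_span_singleton_self F
  let e := LinearEquiv.toSpanNonzeroSingleton 𝕜 (TensorProduct 𝕜 M N) F hF0
  let f₀ : p →ₗ[𝕜] 𝕜 := ((projNorm 𝕜 F : 𝕜) • (e.symm : p →ₗ[𝕜] 𝕜))
  have he1 : e.symm ⟨F, hFp⟩ = 1 := by
    apply e.injective
    rw [e.apply_symm_apply]
    exact (LinearEquiv.toSpanNonzeroSingleton_one 𝕜 (TensorProduct 𝕜 M N) F hF0).symm
  have hf₀F : f₀ ⟨F, hFp⟩ = (projNorm 𝕜 F : 𝕜) := by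
    simp [f₀, he1, RCLike.real_smul_eq_coe_mul]
  have hf₀ : ∀ z : p, ‖f₀ z‖ ≤ 1 * ‖z‖ := by
    intro z
    obtain ⟨c, hc⟩ := Submodule.mem_span_singleton.mp z.2
    have hz : z = c • (⟨F, hFp⟩ : p) := Subtype.ext (by simp [← hc])
    rw [hz, map_smul, hf₀F]
    have hz2 : ‖c • (⟨F, hFp⟩ : p)‖ = ‖c‖ * projNorm 𝕜 F := by
      show ‖((c • (⟨F, hFp⟩ : p) : p) : TensorProduct 𝕜 M N)‖ = _
      rw [Submodule.coe_smul]
      rw [hnorm, projNorm_smul]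
    rw [hz2, one_mul, norm_smul, RCLike.norm_ofReal, abs_of_nonneg (projNorm_nonneg F)]
  let f : p →L[𝕜] 𝕜 := f₀.mkContinuous 1 hf₀
  have hfnorm : ‖f‖ ≤ 1 := f₀.mkContinuous_norm_le zero_le_one hf₀
  obtain ⟨g, hg_ext, hg_norm⟩ := exists_extension_norm_eq p f
  have hgnorm : ‖g‖ ≤ 1 := hg_norm.le.trans hfnorm
  have hgF : g F = (projNorm 𝕜 F : 𝕜) := by
    have := hg_ext ⟨F, hFp⟩
    rw [show ((⟨F, hFp⟩ : p) : TensorProduct 𝕜 M N) = F from rfl] at this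
    rw [this]
    show f₀ ⟨F, hFp⟩ = _
    exact hf₀F
  -- The bilinear form on `M × N` induced by `g`.
  let B : M →ₗ[𝕜] N →ₗ[𝕜] 𝕜 := (TensorProduct.mk 𝕜 M N).compr₂ g.toLinearMap
  have hB : ∀ (u : M) (v : N), ‖B u v‖ ≤ ‖g‖ * ‖u‖ * ‖v‖ := by
    intro u v
    have h1 : ‖g (u ⊗ₜ[𝕜] v)‖ ≤ ‖g‖ * ‖(u ⊗ₜ[𝕜] v : TensorProduct 𝕜 M N)‖ := g.le_opNorm _
    have h2 : ‖(u ⊗ₜ[𝕜] v : TensorProduct 𝕜 M N)‖ ≤ ‖u‖ * ‖v‖ := projNorm_tmul_le u v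
    calc ‖B u v‖ = ‖g (u ⊗ₜ[𝕜] v)‖ := rfl
      _ ≤ ‖g‖ * ‖(u ⊗ₜ[𝕜] v : TensorProduct 𝕜 M N)‖ := h1
      _ ≤ ‖g‖ * (‖u‖ * ‖v‖) := mul_le_mul_of_nonneg_left h2 (norm_nonneg g)
      _ = ‖g‖ * ‖u‖ * ‖v‖ := by ring
  let φ : M →L[𝕜] N →L[𝕜] 𝕜 := B.mkContinuous₂ ‖g‖ hB
  have hφnorm : ‖φ‖ ≤ 1 := (B.mkContinuous₂_norm_le (norm_nonneg g) hB).trans hgnorm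
  obtain ⟨ψ, hψ_ext, hψ_norm⟩ := h φ
  have hψ1 : ‖ψ‖ ≤ 1 := hψ_norm.le.trans hφnorm
  -- Lift of `ψ` agrees with `g` on the image of `M ⊗ N`.
  have hcomp : (TensorProduct.lift ((ContinuousLinearMap.coeLM 𝕜).comp ψ.toLinearMap)).comp
      (TensorProduct.map M.subtype N.subtype) = g.toLinearMap := by
    apply TensorProduct.ext'
    intro u v
    simp only [LinearMap.comp_apply, TensorProduct.map_tmul, TensorProduct.lift.tmul]
    show ψ (M.subtype u) (N.subtype v) = g (u ⊗ₜ[𝕜] v)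
    rw [show M.subtype u = (u : X) from rfl, show N.subtype v = (v : Y) from rfl, hψ_ext u v]
    rfl
  have hval : TensorProduct.lift ((ContinuousLinearMap.coeLM 𝕜).comp ψ.toLinearMap)
      (TensorProduct.map M.subtype N.subtype F) = (projNorm 𝕜 F : 𝕜) := by
    have := LinearMap.congr_fun hcomp F
    simp only [LinearMap.comp_apply] at this
    rw [this]
    exact hgF
  have hfinal : projNorm 𝕜 F =
      ‖TensorProduct.lift ((ContinuousLinearMap.coeLM 𝕜).comp ψ.toLinearMap)
        (TensorProduct.map M.subtype N.subtype F)‖ := by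
    rw [hval, RCLike.norm_ofReal, abs_of_nonneg (projNorm_nonneg F)]
  rw [hfinal]
  calc ‖TensorProduct.lift ((ContinuousLinearMap.coeLM 𝕜).comp ψ.toLinearMap)
        (TensorProduct.map M.subtype N.subtype F)‖
      ≤ ‖ψ‖ * projNorm 𝕜 (TensorProduct.map M.subtype N.subtype F) := norm_lift_le ψ _
    _ ≤ 1 * projNorm 𝕜 (TensorProduct.map M.subtype N.subtype F) :=
        mul_le_mul_of_nonneg_right hψ1 (projNorm_nonneg _)
    _ = projNorm 𝕜 (TensorProduct.map M.subtype N.subtype F) := one_mul _
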